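/- Let T be a monad whose Kleisli hom-sets are complete join-semilattices with composition preserving non-empty joins, and such that ⊥ = ⊥ · f♯ for all f : X → Y in C. Define the saturation α* = ⋁_{n≥0} αⁿ and the trace tr_α = μx.(x·α) = ⋁_{n} ⊥·αⁿ. Then: (1) every kernel bisimulation on α is a weak bisimulation on α (i.e., a kernel bisimulation on α*), and (2) tr_α = tr_{α*}; in particular, weak bisimilarity implies weak trace equivalence. -/

import Mathlib

/-!
STATEMENT 19: Let `T` be a monad whose Kleisli hom-sets are complete join-semilattices
with composition preserving non-empty joins, and with `⊥ = ⊥ · f♯` for all `f : X ⟶ Y`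
in `C`.  Define the saturation `α* = ⋁_{n≥0} αⁿ` and the trace `tr_α = ⋁_n ⊥·αⁿ`.
Then: (1) every kernel bisimulation on `α` is a weak bisimulation on `α` (i.e. a kernel
bisimulation on `α*`), and (2) `tr_α = tr_{α*}`; in particular weak bisimilarity implies
weak trace equivalence.
-/

open CategoryTheory CategoryTheory.Limits

variable {C : Type*} [Category C] (T : Monad C)

/-- An object of `C` viewed as an object of the Kleisli category of `T`. -/
def kObj (X : C) : Kleisli T := Kleisli.mk T X

/-- Kleisli powers `αⁿ` of an endomorphism, with `α⁰ = 1 = η`. -/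
def kPow {X : Kleisli T} (α : X ⟶ X) : ℕ → (X ⟶ X)
  | 0 => 𝟙 X
  | n + 1 => kPow α n ≫ α

/-- A kernel bisimulation on a `T`-coalgebra `α : X → TX` (a Kleisli endomorphism
`α : X ⊸ X`): a jointly monic span presented as the pullback of a cospan of coalgebra
homomorphisms `f, g` out of `α` into some coalgebra `γ`.  The homomorphism condition
`γ ∘ f = Tf ∘ α` reads `f♯ ≫ γ = α ≫ f♯` in `Kl(T)`. -/
def IsKernelBisim {X R : C} (α : kObj T X ⟶ kObj T X) (p₁ p₂ : R ⟶ X) : Prop :=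
  ∃ (Z : C) (γ : kObj T Z ⟶ kObj T Z) (f g : X ⟶ Z),
    ((Kleisli.Adjunction.toKleisli T).map f ≫ γ =
        α ≫ (Kleisli.Adjunction.toKleisli T).map f) ∧
    ((Kleisli.Adjunction.toKleisli T).map g ≫ γ =
        α ≫ (Kleisli.Adjunction.toKleisli T).map g) ∧
    IsPullback p₁ p₂ f g

theorem strong_bisim_weak_bisim_and_weak_trace [HasInitial C]
    [∀ X Y : Kleisli T, CompleteLattice (X ⟶ Y)]
    -- composition preserves non-empty joins on both sides
    (hpost : ∀ {X Y Z : Kleisli T} (f : X ⟶ Y) (S : Set (Y ⟶ Z)), S.Nonempty →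
      f ≫ sSup S = sSup ((fun g => f ≫ g) '' S))
    (hpre : ∀ {X Y Z : Kleisli T} (g : Y ⟶ Z) (S : Set (X ⟶ Y)), S.Nonempty →
      sSup S ≫ g = sSup ((fun f => f ≫ g) '' S))
    -- `⊥ = ⊥ · f♯` for every morphism `f` of `C`
    (hbot : ∀ {X Y : C} (f : X ⟶ Y),
      (Kleisli.Adjunction.toKleisli T).map f ≫ (⊥ : kObj T Y ⟶ kObj T (⊥_ C)) =
        (⊥ : kObj T X ⟶ kObj T (⊥_ C))) :
    -- (1) every kernel bisimulation on `α` is one on `α* = ⋁ₙ αⁿ` (a weak bisimulation)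
    (∀ {X R : C} (α : kObj T X ⟶ kObj T X) (p₁ p₂ : R ⟶ X),
      IsKernelBisim T α p₁ p₂ → IsKernelBisim T (⨆ n : ℕ, kPow T α n) p₁ p₂) ∧
    -- (2) `tr_α = tr_{α*}` where `tr_β = ⋁ₙ βⁿ ≫ ⊥ = μx.(x·β)`
    (∀ {X : C} (α : kObj T X ⟶ kObj T X),
      (⨆ n : ℕ, kPow T α n ≫ (⊥ : kObj T X ⟶ kObj T (⊥_ C))) =
        ⨆ n : ℕ, kPow T (⨆ m : ℕ, kPow T α m) n ≫ (⊥ : kObj T X ⟶ kObj T (⊥_ C))) := by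
  have comp_iSup : ∀ {X Y Z : Kleisli T} (f : X ⟶ Y) (g : ℕ → (Y ⟶ Z)),
      f ≫ (⨆ n, g n) = ⨆ n, f ≫ g n := by
    intro X Y Z f g
    rw [iSup, hpost f _ ⟨g 0, Set.mem_range_self 0⟩, ← Set.range_comp, iSup]
    rfl
  have iSup_comp : ∀ {X Y Z : Kleisli T} (g : Y ⟶ Z) (f : ℕ → (X ⟶ Y)),
      (⨆ n, f n) ≫ g = ⨆ n, f n ≫ g := by
    intro X Y Z g f
    rw [iSup, hpre g _ ⟨f 0, Set.mem_range_self 0⟩, ← Set.range_comp, iSup]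
    rfl
  have mono_post : ∀ {X Y Z : Kleisli T} (f : X ⟶ Y) {g₁ g₂ : Y ⟶ Z}, g₁ ≤ g₂ →
      f ≫ g₁ ≤ f ≫ g₂ := by
    intro X Y Z f g₁ g₂ h
    have h2 : f ≫ sSup {g₁, g₂} = sSup ((fun g => f ≫ g) '' {g₁, g₂}) :=
      hpost f _ ⟨g₁, by simp⟩
    rw [sSup_pair, Set.image_pair, sSup_pair, sup_eq_right.mpr h] at h2
    rw [h2]; exact le_sup_left
  have kPow_add : ∀ {X : Kleisli T} (α : X ⟶ X) (m k : ℕ),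
      kPow T α m ≫ kPow T α k = kPow T α (m + k) := by
    intro X α m k
    induction k with
    | zero => simp [kPow]
    | succ k ih =>
      show kPow T α m ≫ (kPow T α k ≫ α) = kPow T α (m + k) ≫ α
      rw [← Category.assoc, ih]
  constructor
  · rintro X R α p₁ p₂ ⟨Z, γ, f, g, hf, hg, hpb⟩
    have key : ∀ {f : X ⟶ Z} (_ : (Kleisli.Adjunction.toKleisli T).map f ≫ γ =
        α ≫ (Kleisli.Adjunction.toKleisli T).map f) (n : ℕ),
        (Kleisli.Adjunction.toKleisli T).map f ≫ kPow T γ n =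
          kPow T α n ≫ (Kleisli.Adjunction.toKleisli T).map f := by
      intro f hf n
      induction n with
      | zero =>
        simp [kPow]
        exact (Category.id_comp ((Kleisli.Adjunction.toKleisli T).map f)).symm
      | succ n ih =>
        show (Kleisli.Adjunction.toKleisli T).map f ≫ (kPow T γ n ≫ γ) =
          (kPow T α n ≫ α) ≫ (Kleisli.Adjunction.toKleisli T).map f
        erw [← Category.assoc, ih, Category.assoc, hf, Category.assoc]
        rfl
    refine ⟨Z, ⨆ n, kPow T γ n, f, g, ?_, ?_, hpb⟩
    · erw [comp_iSup, iSup_comp]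
      exact congrArg _ (funext (key hf))
    · erw [comp_iSup, iSup_comp]
      exact congrArg _ (funext (key hg))
  · intro X α
    set t : kObj T X ⟶ kObj T (⊥_ C) :=
      ⨆ n, kPow T α n ≫ (⊥ : kObj T X ⟶ kObj T (⊥_ C)) with ht
    have hstar_t : (⨆ m, kPow T α m) ≫ t = t := by
      rw [iSup_comp]
      apply le_antisymm
      · apply iSup_le; intro m
        rw [ht, comp_iSup]
        apply iSup_le; intro k
        rw [← Category.assoc, kPow_add]
        exact le_iSup (fun n => kPow T α n ≫ (⊥ : kObj T X ⟶ kObj T (⊥_ C))) (m + k)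
      · have h0 : t = kPow T α 0 ≫ t := by simp [kPow]
        exact h0.le.trans (le_iSup (fun m => kPow T α m ≫ t) 0)
    have key2 : ∀ n, kPow T (⨆ m, kPow T α m) n ≫ t = t := by
      intro n
      induction n with
      | zero => simp [kPow]
      | succ n ih =>
        show (kPow T (⨆ m, kPow T α m) n ≫ (⨆ m, kPow T α m)) ≫ t = t
        rw [Category.assoc, hstar_t, ih]
    apply le_antisymm
    · have h1 : t = kPow T (⨆ m, kPow T α m) 1 ≫
          (⊥ : kObj T X ⟶ kObj T (⊥_ C)) := by
        show t = (𝟙 _ ≫ ⨆ m, kPow T α m) ≫ _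
        rw [Category.id_comp, iSup_comp]
      rw [ht] at h1 ⊢
      rw [h1]
      exact le_iSup (fun n => kPow T (⨆ m, kPow T α m) n ≫
        (⊥ : kObj T X ⟶ kObj T (⊥_ C))) 1
    · apply iSup_le; intro n
      calc kPow T (⨆ m, kPow T α m) n ≫ (⊥ : kObj T X ⟶ kObj T (⊥_ C))
          ≤ kPow T (⨆ m, kPow T α m) n ≫ t := mono_post _ bot_le
        _ = t := key2 n
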